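/- For all positive integers k and j, the misère outcome of the Partizan Kayles position consisting of k strips of length 1 and j strips of length 2 is: N if k = j, or if k < j and k + 2j ≡ 0 (mod 3); R if k > j, or if k < j and k + 2j ≡ 1 (mod 3); P if k < j and k + 2j ≡ 2 (mod 3). -/
import Mathlib


/-- Add a strip of length `k` to a position (strips of length 0 are discarded). -/
def addStrip (m : Multiset ℕ) (k : ℕ) : Multiset ℕ := if k = 0 then m else k ::ₘ m

/-- Left removes one square from a strip of length `n ≥ 1`, leaving strips `i` and `n-1-i`. -/
def LeftMove (G G' : Multiset ℕ) : Prop :=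
  ∃ n ∈ G, ∃ i, i + 1 ≤ n ∧ G' = addStrip (addStrip (G.erase n) i) (n - 1 - i)

/-- Right removes two adjacent squares from a strip of length `n ≥ 2`, leaving `i` and `n-2-i`. -/
def RightMove (G G' : Multiset ℕ) : Prop :=
  ∃ n ∈ G, ∃ i, i + 2 ≤ n ∧ G' = addStrip (addStrip (G.erase n) i) (n - 2 - i)

mutual
  /-- Misère play: Left, to move, wins (a player unable to move wins). -/
  inductive LeftWinsMover : Multiset ℕ → Prop
    | cannot (G : Multiset ℕ) : (¬ ∃ G', LeftMove G G') → LeftWinsMover G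
    | move (G G' : Multiset ℕ) : LeftMove G G' → LeftWinsWaiter G' → LeftWinsMover G
  /-- Misère play: Left wins with Right to move. -/
  inductive LeftWinsWaiter : Multiset ℕ → Prop
    | intro (G : Multiset ℕ) : (∃ G', RightMove G G') →
        (∀ G', RightMove G G' → LeftWinsMover G') → LeftWinsWaiter G
end

inductive Outcome | L | N | P | R
  deriving DecidableEq

open Classical in
/-- The misère outcome `o⁻(G)`. -/
noncomputable def outcome (G : Multiset ℕ) : Outcome :=
  if LeftWinsMover G then (if LeftWinsWaiter G then Outcome.L else Outcome.N)
  else (if LeftWinsWaiter G then Outcome.P else Outcome.R)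

/-- The partial order on outcomes: `L` greatest, `R` least, `N` and `P` incomparable. -/
def Outcome.le (a b : Outcome) : Prop := a = b ∨ a = Outcome.R ∨ b = Outcome.L

/-- `pos k j` is the position `kS₁ + jS₂`. -/
def pos (k j : ℕ) : Multiset ℕ := Multiset.replicate k 1 + Multiset.replicate j 2


lemma mem_pos {n k j : ℕ} : n ∈ pos k j ↔ (n = 1 ∧ 1 ≤ k) ∨ (n = 2 ∧ 1 ≤ j) := by
  simp [pos, Multiset.mem_replicate]
  omega

lemma one_cons (k j : ℕ) : 1 ::ₘ pos k j = pos (k+1) j := by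
  simp [pos, Multiset.replicate_succ, Multiset.cons_add]

lemma two_cons (k j : ℕ) : 2 ::ₘ pos k j = pos k (j+1) := by
  simp [pos, Multiset.replicate_succ]

lemma erase_one (k j : ℕ) : (pos (k+1) j).erase 1 = pos k j := by
  rw [← one_cons, Multiset.erase_cons_head]

lemma erase_two (k j : ℕ) : (pos k (j+1)).erase 2 = pos k j := by
  rw [← two_cons, Multiset.erase_cons_head]

lemma addStrip_zero (m : Multiset ℕ) : addStrip m 0 = m := rfl
lemma addStrip_one (m : Multiset ℕ) : addStrip m 1 = 1 ::ₘ m := rfl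

lemma leftMove_pos {k j : ℕ} {G' : Multiset ℕ} :
    LeftMove (pos k j) G' ↔ (1 ≤ k ∧ G' = pos (k-1) j) ∨ (1 ≤ j ∧ G' = pos (k+1) (j-1)) := by
  constructor
  · rintro ⟨n, hn, i, hi, rfl⟩
    rw [mem_pos] at hn
    rcases hn with ⟨rfl, hk⟩ | ⟨rfl, hj⟩
    · left
      obtain ⟨k', rfl⟩ : ∃ k', k = k' + 1 := ⟨k - 1, by omega⟩
      obtain rfl : i = 0 := by omega
      simp [erase_one, addStrip_zero]
    · right
      obtain ⟨j', rfl⟩ : ∃ j', j = j' + 1 := ⟨j - 1, by omega⟩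
      refine ⟨by omega, ?_⟩
      obtain rfl | rfl : i = 0 ∨ i = 1 := by omega
      · simp [erase_two, addStrip_zero, addStrip_one, one_cons]
      · simp [erase_two, addStrip_zero, addStrip_one, one_cons]
  · rintro (⟨hk, rfl⟩ | ⟨hj, rfl⟩)
    · obtain ⟨k', rfl⟩ : ∃ k', k = k' + 1 := ⟨k - 1, by omega⟩
      exact ⟨1, by rw [mem_pos]; omega, 0, by omega, by simp [erase_one, addStrip_zero]⟩
    · obtain ⟨j', rfl⟩ : ∃ j', j = j' + 1 := ⟨j - 1, by omega⟩
      exact ⟨2, by rw [mem_pos]; omega, 0, by omega,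
        by simp [erase_two, addStrip_zero, addStrip_one, one_cons]⟩

lemma rightMove_pos {k j : ℕ} {G' : Multiset ℕ} :
    RightMove (pos k j) G' ↔ 1 ≤ j ∧ G' = pos k (j-1) := by
  constructor
  · rintro ⟨n, hn, i, hi, rfl⟩
    rw [mem_pos] at hn
    rcases hn with ⟨rfl, hk⟩ | ⟨rfl, hj⟩
    · omega
    · obtain ⟨j', rfl⟩ : ∃ j', j = j' + 1 := ⟨j - 1, by omega⟩
      obtain rfl : i = 0 := by omega
      simp [erase_two, addStrip_zero]
  · rintro ⟨hj, rfl⟩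
    obtain ⟨j', rfl⟩ : ∃ j', j = j' + 1 := ⟨j - 1, by omega⟩
    exact ⟨2, by rw [mem_pos]; omega, 0, by omega, by simp [erase_two, addStrip_zero]⟩

lemma waiter_iff (k j : ℕ) :
    LeftWinsWaiter (pos k j) ↔ 1 ≤ j ∧ LeftWinsMover (pos k (j-1)) := by
  constructor
  · rintro ⟨_, ⟨G', hG'⟩, hall⟩
    rw [rightMove_pos] at hG'
    exact ⟨hG'.1, hall _ (by rw [rightMove_pos]; exact ⟨hG'.1, rfl⟩)⟩
  · rintro ⟨hj, hM⟩
    refine ⟨_, ⟨pos k (j-1), by rw [rightMove_pos]; exact ⟨hj, rfl⟩⟩, fun G' h => ?_⟩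
    rw [rightMove_pos] at h
    rw [h.2]; exact hM

lemma mover_iff : ∀ j k, LeftWinsMover (pos k j) ↔ (k = j ∨ (k < j ∧ (j - k) % 3 = 0)) := by
  intro j
  induction j using Nat.strong_induction_on with
  | _ j ih =>
    intro k
    constructor
    · intro h
      cases h with
      | cannot _ hno =>
        by_contra hc
        have hkj : 1 ≤ k ∨ 1 ≤ j := by omega
        rcases hkj with hk | hj
        · exact hno ⟨pos (k-1) j, by rw [leftMove_pos]; exact Or.inl ⟨hk, rfl⟩⟩
        · exact hno ⟨pos (k+1) (j-1), by rw [leftMove_pos]; exact Or.inr ⟨hj, rfl⟩⟩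
      | move _ G' hm hw =>
        rw [leftMove_pos] at hm
        rcases hm with ⟨hk, rfl⟩ | ⟨hj, rfl⟩
        · rw [waiter_iff] at hw
          obtain ⟨hj1, hM⟩ := hw
          rw [ih (j-1) (by omega)] at hM
          omega
        · rw [waiter_iff] at hw
          obtain ⟨hj1, hM⟩ := hw
          rw [ih (j-1-1) (by omega)] at hM
          omega
    · intro h
      rcases Nat.eq_zero_or_pos (k + j) with h0 | hpos
      · refine LeftWinsMover.cannot _ ?_
        rintro ⟨G', hG'⟩
        rw [leftMove_pos] at hG'
        omega
      · rcases h with rfl | ⟨hlt, hmod⟩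
        · -- k = j ≥ 1 : move to pos (k-1) k
          refine LeftWinsMover.move _ (pos (k-1) k)
            (by rw [leftMove_pos]; exact Or.inl ⟨by omega, rfl⟩) ?_
          rw [waiter_iff]
          refine ⟨by omega, ?_⟩
          rw [ih (k-1) (by omega)]
          omega
        · -- k < j, 3 ∣ j - k : move to pos (k+1) (j-1)
          refine LeftWinsMover.move _ (pos (k+1) (j-1))
            (by rw [leftMove_pos]; exact Or.inr ⟨by omega, rfl⟩) ?_
          rw [waiter_iff]
          refine ⟨by omega, ?_⟩
          rw [ih (j-1-1) (by omega)]
          omega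

lemma outcome_eq_N {G : Multiset ℕ} (h1 : LeftWinsMover G) (h2 : ¬ LeftWinsWaiter G) :
    outcome G = Outcome.N := by simp [outcome, h1, h2]

lemma outcome_eq_R {G : Multiset ℕ} (h1 : ¬ LeftWinsMover G) (h2 : ¬ LeftWinsWaiter G) :
    outcome G = Outcome.R := by simp [outcome, h1, h2]

lemma outcome_eq_P {G : Multiset ℕ} (h1 : ¬ LeftWinsMover G) (h2 : LeftWinsWaiter G) :
    outcome G = Outcome.P := by simp [outcome, h1, h2]

theorem kayles_outcome_ones_twos (k j : ℕ) (hk : 1 ≤ k) (hj : 1 ≤ j) :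
    ((k = j ∨ (k < j ∧ (k + 2 * j) % 3 = 0)) → outcome (pos k j) = Outcome.N) ∧
    ((k > j ∨ (k < j ∧ (k + 2 * j) % 3 = 1)) → outcome (pos k j) = Outcome.R) ∧
    ((k < j ∧ (k + 2 * j) % 3 = 2) → outcome (pos k j) = Outcome.P) := by
  refine ⟨fun h => ?_, fun h => ?_, fun h => ?_⟩
  · exact outcome_eq_N (by rw [mover_iff]; omega)
      (by rw [waiter_iff, mover_iff]; omega)
  · exact outcome_eq_R (by rw [mover_iff]; omega)
      (by rw [waiter_iff, mover_iff]; omega)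
  · exact outcome_eq_P (by rw [mover_iff]; omega)
      (by rw [waiter_iff, mover_iff]; omega)
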